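/- Let H be a Hilbert space, η_1,...,η_k an orthonormal system in H, and V the span of the η_j. Let P be an orthogonal projection on H and P_V the orthogonal projection onto V. If W is a finite-dimensional subspace of H such that for each j there is w ∈ W with ‖P(η_j) - w‖ ≤ ε, then dim W ≥ Tr(P_V P) - kε. -/

import Mathlib

/-- Let `H` be a Hilbert space, `η₁, …, η_k` an orthonormal system in `H`,
and `V` the span of the `η_j`. Let `P` be an orthogonal projection on `H` (a self-adjoint
idempotent bounded operator) and `P_V` the orthogonal projection onto `V`. If `W` is a
finite-dimensional subspace of `H` such that each `P (η j)` is within distance `ε` of `W`,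
then `dim W ≥ Tr(P_V P) - k ε`.  Here `Tr(P_V P)` is the trace of the finite-rank operator
`P_V P`, which equals `∑ j ⟪P η_j, η_j⟫` (a real number). -/
theorem projection_trace_dim_lower_bound
    {H : Type*} [NormedAddCommGroup H] [InnerProductSpace ℂ H] [CompleteSpace H]
    {k : ℕ} {η : Fin k → H} (hη : Orthonormal ℂ η)
    (P : H →L[ℂ] H) (hP_idem : IsIdempotentElem P) (hP_sa : IsSelfAdjoint P)
    (W : Submodule ℂ H) [FiniteDimensional ℂ W]
    {ε : ℝ} (hε : 0 < ε)
    (hcont : ∀ j : Fin k, ∃ w ∈ W, ‖P (η j) - w‖ ≤ ε) :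
    (∑ j : Fin k, ((inner ℂ (η j) (P (η j)) : ℂ)).re) - (k : ℝ) * ε
      ≤ (Module.finrank ℂ W : ℝ) := by
  classical
  have hPP : ∀ x : H, P (P x) = P x := fun x => by
    conv_rhs => rw [← hP_idem]
    rfl
  have hsym : ∀ x y : H, (inner ℂ (P x) y : ℂ) = inner ℂ x (P y) :=
    fun x y => hP_sa.isSymmetric x y
  have hinner : ∀ x : H, (inner ℂ x (P x) : ℂ) = inner ℂ (P x) (P x) := by
    intro x
    have h := (hsym x (P x)).symm
    rwa [hPP] at h
  have hre : ∀ x : H, ((inner ℂ x (P x) : ℂ)).re = ‖P x‖ ^ 2 := by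
    intro x
    rw [hinner x, inner_self_eq_norm_sq_to_K]
    norm_cast
  have hPnorm : ∀ x : H, ‖P x‖ ≤ ‖x‖ := by
    intro x
    have h1 : ‖P x‖ ^ 2 = ((inner ℂ x (P x) : ℂ)).re := (hre x).symm
    have h2 : ((inner ℂ x (P x) : ℂ)).re ≤ ‖x‖ * ‖P x‖ := by
      calc ((inner ℂ x (P x) : ℂ)).re ≤ ‖(inner ℂ x (P x) : ℂ)‖ := Complex.re_le_norm _
        _ ≤ ‖x‖ * ‖P x‖ := norm_inner_le_norm _ _
    rcases (norm_nonneg (P x)).eq_or_lt with h | h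
    · rw [← h]; exact norm_nonneg x
    · nlinarith
  set Q := W.orthogonalProjectionOnto with hQdef
  -- distance bound
  have hproj : ∀ j, ‖P (η j) - Q (P (η j))‖ ^ 2 ≤ ε := by
    intro j
    obtain ⟨w, hwW, hw⟩ := hcont j
    have hbdd : BddBelow (Set.range fun v : W => ‖P (η j) - v‖) := by
      refine ⟨0, ?_⟩
      rintro y ⟨v, rfl⟩
      exact norm_nonneg _
    have hmin : ‖P (η j) - Q (P (η j))‖ ≤ ‖P (η j) - w‖ := by
      rw [show ‖P (η j) - Q (P (η j))‖ = ⨅ x : W, ‖P (η j) - x‖ from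
        Submodule.starProjection_minimal _]
      exact ciInf_le hbdd (⟨w, hwW⟩ : W)
    have hmin0 : ‖P (η j) - Q (P (η j))‖ ≤ ‖P (η j)‖ := by
      rw [show ‖P (η j) - Q (P (η j))‖ = ⨅ x : W, ‖P (η j) - x‖ from
        Submodule.starProjection_minimal _]
      have := ciInf_le hbdd (⟨0, W.zero_mem⟩ : W)
      simpa using this
    have h1 : ‖P (η j)‖ ≤ 1 := by
      have := hPnorm (η j)
      rwa [hη.1 j] at this
    have h0 : (0:ℝ) ≤ ‖P (η j) - Q (P (η j))‖ := norm_nonneg _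
    nlinarith [hmin.trans hw]
  have hpyth : ∀ j, ‖P (η j)‖ ^ 2 ≤ ‖Q (P (η j))‖ ^ 2 + ε := by
    intro j
    have h := Submodule.norm_sq_eq_add_norm_sq_projection (P (η j)) W
    have h2 : ‖Wᗮ.orthogonalProjectionOnto (P (η j))‖ = ‖P (η j) - Q (P (η j))‖ := by
      have h3 : (Wᗮ.orthogonalProjectionOnto (P (η j)) : H) = P (η j) - Q (P (η j)) := by
        exact Submodule.starProjection_orthogonal_val (K := W) _
      rw [show ‖Wᗮ.orthogonalProjectionOnto (P (η j))‖
            = ‖(Wᗮ.orthogonalProjectionOnto (P (η j)) : H)‖ from rfl, h3]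
    rw [h, h2]
    have := hproj j
    linarith
  -- Parseval for the projection onto W
  let b := stdOrthonormalBasis ℂ W
  have hQsum : ∀ x : H, ‖Q x‖ ^ 2
      = ∑ i, ‖(inner ℂ ((b i : H)) x : ℂ)‖ ^ 2 := by
    intro x
    have h1 : (inner ℂ (Q x) (Q x) : ℂ)
        = ∑ i, inner ℂ (Q x) (b i) * inner ℂ (b i) (Q x) :=
      (b.sum_inner_mul_inner (Q x) (Q x)).symm
    have h2 : ∀ i, (inner ℂ (b i) (Q x) : ℂ) = inner ℂ ((b i : H)) x := fun i =>
      Submodule.inner_orthogonalProjectionOnto_eq_of_mem_left (K := W) (b i) x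
    have h3 : ∀ i, (inner ℂ (Q x) (b i) : ℂ) = starRingEnd ℂ (inner ℂ ((b i : H)) x) := by
      intro i
      rw [← inner_conj_symm, h2]
    have h4 : (inner ℂ (Q x) (Q x) : ℂ) = (‖Q x‖ : ℂ) ^ 2 := inner_self_eq_norm_sq_to_K _
    have h5 : ((∑ i, ‖(inner ℂ ((b i : H)) x : ℂ)‖ ^ 2 : ℝ) : ℂ) = ((‖Q x‖ ^ 2 : ℝ) : ℂ) := by
      push_cast
      rw [← h4, h1]
      refine Finset.sum_congr rfl fun i _ => ?_
      rw [h3, h2, RCLike.conj_mul]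
      norm_cast
    exact_mod_cast h5.symm
  have hBessel : ∀ i, (∑ j, ‖(inner ℂ ((b i : H)) (P (η j)) : ℂ)‖ ^ 2) ≤ 1 := by
    intro i
    have h1 : ∀ j, ‖(inner ℂ ((b i : H)) (P (η j)) : ℂ)‖
        = ‖(inner ℂ (η j) (P (b i : H)) : ℂ)‖ := by
      intro j
      rw [show (inner ℂ ((b i : H)) (P (η j)) : ℂ) = inner ℂ (P (b i : H)) (η j) from
        (hsym (b i : H) (η j)).symm]
      exact norm_inner_symm _ _
    have hb1 : ‖(b i : H)‖ = 1 := by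
      have := b.orthonormal.1 i
      exact this
    calc (∑ j, ‖(inner ℂ ((b i : H)) (P (η j)) : ℂ)‖ ^ 2)
        = ∑ j, ‖(inner ℂ (η j) (P (b i : H)) : ℂ)‖ ^ 2 := by
          exact Finset.sum_congr rfl fun j _ => by rw [h1]
      _ ≤ ‖P (b i : H)‖ ^ 2 := hη.sum_inner_products_le _
      _ ≤ 1 := by
          have := hPnorm (b i : H)
          rw [hb1] at this
          nlinarith [norm_nonneg (P (b i : H))]
  -- assemble
  have hmain : (∑ j : Fin k, ((inner ℂ (η j) (P (η j)) : ℂ)).re)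
      ≤ (Module.finrank ℂ W : ℝ) + (k : ℝ) * ε := by
    calc (∑ j : Fin k, ((inner ℂ (η j) (P (η j)) : ℂ)).re)
        = ∑ j : Fin k, ‖P (η j)‖ ^ 2 := Finset.sum_congr rfl fun j _ => hre _
      _ ≤ ∑ j : Fin k, (‖Q (P (η j))‖ ^ 2 + ε) :=
          Finset.sum_le_sum fun j _ => hpyth j
      _ = (∑ j : Fin k, ‖Q (P (η j))‖ ^ 2) + (k : ℝ) * ε := by
          rw [Finset.sum_add_distrib]
          simp [mul_comm]
      _ = (∑ j : Fin k, ∑ i, ‖(inner ℂ ((b i : H)) (P (η j)) : ℂ)‖ ^ 2) + (k : ℝ) * ε := by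
          rw [Finset.sum_congr rfl fun j _ => hQsum (P (η j))]
      _ = (∑ i, ∑ j : Fin k, ‖(inner ℂ ((b i : H)) (P (η j)) : ℂ)‖ ^ 2) + (k : ℝ) * ε := by
          rw [Finset.sum_comm]
      _ ≤ (∑ _i : Fin (Module.finrank ℂ W), (1:ℝ)) + (k : ℝ) * ε := by
          gcongr with i _
          exact hBessel i
      _ = (Module.finrank ℂ W : ℝ) + (k : ℝ) * ε := by simp
  linarith
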